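/- Let c ∈ ℝ with c ≠ 0, let g : ℝ → ℝ be a bounded Lebesgue-measurable function, and let M ⊆ ℝ be a set with nonempty interior. If ∫_ℝ g(c(m + e)) φ(e) de = 0 for every m ∈ M, where φ(e) = (2π)^{-1/2} exp(−e²/2) is the standard normal density, then g = 0 Lebesgue-almost everywhere. -/

import Mathlib

open MeasureTheory

/-- The standard normal density `φ(t) = (2π)^{-1/2} exp(-t²/2)`. -/
noncomputable def stdNormalPDF (t : ℝ) : ℝ :=
  (Real.sqrt (2 * Real.pi))⁻¹ * Real.exp (-t ^ 2 / 2)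

open Filter Complex
open scoped FourierTransform Topology ContDiff

lemma aux_exp_integrable (b : ℝ) :
    Integrable (fun u : ℝ => Real.exp (b * |u| - u ^ 2 / 2)) := by
  have h : Integrable (fun u : ℝ => Real.exp (b ^ 2) * Real.exp (-(1/4) * u ^ 2)) :=
    (integrable_exp_neg_mul_sq (by norm_num)).const_mul _
  refine h.mono' ?_ ?_
  · exact (Real.continuous_exp.comp (by fun_prop)).aestronglyMeasurable
  · filter_upwards with u
    rw [Real.norm_eq_abs, abs_of_pos (Real.exp_pos _), ← Real.exp_add]
    apply Real.exp_le_exp.2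
    nlinarith [sq_nonneg (b - |u| / 2), _root_.sq_abs u]

/-- bounded completeness of the scaled Gaussian index family
`v = c (m + e)`, `e` standard normal, `c ≠ 0` a fixed scale, mean `m` ranging
over a set with nonempty interior. -/
theorem scaled_gaussian_bounded_complete
    (c : ℝ) (hc : c ≠ 0)
    (g : ℝ → ℝ) (hgm : Measurable g) (hgb : ∃ C : ℝ, ∀ t, |g t| ≤ C)
    (M : Set ℝ) (hM : (interior M).Nonempty)
    (hzero : ∀ m ∈ M, ∫ e : ℝ, g (c * (m + e)) * stdNormalPDF e = 0) :
    ∀ᵐ t : ℝ ∂volume, g t = 0 := by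
  obtain ⟨C₀, hC₀⟩ := hgb
  set C := max C₀ 0 with hCdef
  have hC : ∀ t, |g t| ≤ C := fun t => (hC₀ t).trans (le_max_left _ _)
  set H : ℝ → ℝ := fun u => g (c * u) * Real.exp (-u ^ 2 / 2) with hHdef
  have hHmeas : Measurable H :=
    (hgm.comp (measurable_const_mul c)).mul (Real.measurable_exp.comp (by fun_prop))
  have hHbound : ∀ u, |H u| ≤ C * Real.exp (-u ^ 2 / 2) := by
    intro u
    rw [hHdef]
    simp only [abs_mul, abs_of_pos (Real.exp_pos _)]
    exact mul_le_mul_of_nonneg_right (hC _) (Real.exp_pos _).le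
  -- Step A : real exponential moments vanish on M
  have hA : ∀ m ∈ M, ∫ u : ℝ, H u * Real.exp (m * u) = 0 := by
    intro m hm
    have h1 : ∫ u : ℝ, g (c * u) * stdNormalPDF (u - m) = 0 := by
      rw [← integral_add_right_eq_self (μ := volume)
        (fun u : ℝ => g (c * u) * stdNormalPDF (u - m)) m]
      simp only [add_sub_cancel_right]
      have := hzero m hm
      simp_rw [add_comm m] at this
      exact this
    have h2 : ∀ u : ℝ, g (c * u) * stdNormalPDF (u - m)
        = ((Real.sqrt (2 * Real.pi))⁻¹ * Real.exp (-m ^ 2 / 2))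
          * (H u * Real.exp (m * u)) := by
      intro u
      have hexp : Real.exp (-(u - m) ^ 2 / 2)
          = Real.exp (-m ^ 2 / 2) * (Real.exp (-u ^ 2 / 2) * Real.exp (m * u)) := by
        rw [← Real.exp_add, ← Real.exp_add]; congr 1; ring
      simp only [stdNormalPDF, hHdef]
      rw [hexp]; ring
    have hK : ((Real.sqrt (2 * Real.pi))⁻¹ * Real.exp (-m ^ 2 / 2)) ≠ 0 := by
      positivity
    simp_rw [h2] at h1
    rw [integral_const_mul] at h1
    exact (mul_eq_zero.mp h1).resolve_left hK
  -- measurability and integrability of the complex kernel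
  have hmeas1 : ∀ z : ℂ, AEStronglyMeasurable (fun u : ℝ => (H u : ℂ) * Complex.exp (z * u)) volume := by
    intro z
    exact ((Complex.measurable_ofReal.comp hHmeas).mul
      ((Complex.continuous_exp.comp
        (continuous_const.mul Complex.continuous_ofReal)).measurable)).aestronglyMeasurable
  have key_int : ∀ z : ℂ, Integrable (fun u : ℝ => (H u : ℂ) * Complex.exp (z * u)) := by
    intro z
    refine ((aux_exp_integrable |z.re|).const_mul C).mono' (hmeas1 z) ?_
    filter_upwards with u
    have hnorm : ‖(H u : ℂ) * Complex.exp (z * u)‖ = |H u| * Real.exp (z.re * u) := by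
      simp [map_mul, Complex.norm_real, Complex.norm_exp, Complex.mul_re]
    rw [hnorm]
    calc |H u| * Real.exp (z.re * u)
        ≤ (C * Real.exp (-u ^ 2 / 2)) * Real.exp (|z.re| * |u|) :=
          mul_le_mul (hHbound u)
            (Real.exp_le_exp.2 ((le_abs_self _).trans (abs_mul z.re u).le))
            (Real.exp_pos _).le (by positivity)
      _ = C * Real.exp (|z.re| * |u| - u ^ 2 / 2) := by
          rw [mul_assoc, ← Real.exp_add]; ring_nf
  set G : ℂ → ℂ := fun z => ∫ u : ℝ, (H u : ℂ) * Complex.exp (z * u) with hGdef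
  have hderiv : ∀ z₀ : ℂ, HasDerivAt G (∫ u : ℝ, (H u : ℂ) * (Complex.exp (z₀ * u) * u)) z₀ := by
    intro z₀
    have hmeas' : AEStronglyMeasurable
        (fun u : ℝ => (H u : ℂ) * (Complex.exp (z₀ * u) * u)) volume :=
      ((Complex.measurable_ofReal.comp hHmeas).mul
        (((Complex.continuous_exp.comp (continuous_const.mul Complex.continuous_ofReal)).mul
          Complex.continuous_ofReal).measurable)).aestronglyMeasurable
    have hmain := hasDerivAt_integral_of_dominated_loc_of_deriv_le
      (F := fun (z : ℂ) (u : ℝ) => (H u : ℂ) * Complex.exp (z * u))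
      (F' := fun (z : ℂ) (u : ℝ) => (H u : ℂ) * (Complex.exp (z * u) * u))
      (x₀ := z₀) (s := Metric.ball z₀ 1)
      (bound := fun u : ℝ => C * Real.exp ((‖z₀‖ + 2) * |u| - u ^ 2 / 2))
      (Metric.ball_mem_nhds z₀ one_pos) (Eventually.of_forall fun z => hmeas1 z) (key_int z₀) hmeas' ?_ ?_ ?_
    · exact hmain.2
    · filter_upwards with u
      intro z hz
      have hz1 : ‖z‖ ≤ ‖z₀‖ + 1 := by
        have h' := mem_ball_iff_norm.mp hz
        have h'' := norm_sub_norm_le z z₀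
        linarith
      have habs : ‖(H u : ℂ) * (Complex.exp (z * u) * u)‖
          = |H u| * (Real.exp (z.re * u) * |u|) := by
        simp [map_mul, Complex.norm_real, Complex.norm_exp, Complex.mul_re]
      rw [habs]
      have h1 : z.re * u ≤ (‖z₀‖ + 1) * |u| := by
        calc z.re * u ≤ |z.re * u| := le_abs_self _
          _ = |z.re| * |u| := abs_mul _ _
          _ ≤ (‖z₀‖ + 1) * |u| := by
              refine mul_le_mul_of_nonneg_right ?_ (abs_nonneg u)
              exact (Complex.abs_re_le_norm z).trans hz1
      have h2 : |u| ≤ Real.exp |u| := by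
        have h3 := Real.add_one_le_exp |u|
        linarith
      calc |H u| * (Real.exp (z.re * u) * |u|)
          ≤ (C * Real.exp (-u ^ 2 / 2)) * (Real.exp ((‖z₀‖ + 1) * |u|) * Real.exp |u|) :=
            mul_le_mul (hHbound u)
              (mul_le_mul (Real.exp_le_exp.2 h1) h2 (abs_nonneg u) (Real.exp_pos _).le)
              (by positivity) (by positivity)
        _ = C * Real.exp ((‖z₀‖ + 2) * |u| - u ^ 2 / 2) := by
            rw [mul_assoc, ← Real.exp_add, ← Real.exp_add]; ring_nf
    · exact (aux_exp_integrable _).const_mul C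
    · filter_upwards with u
      intro z hz
      have h1 : HasDerivAt (fun z : ℂ => z * (u : ℂ)) ((u : ℂ)) z := hasDerivAt_mul_const _
      exact h1.cexp.const_mul ((H u : ℂ))
  have hGdiff : Differentiable ℂ G := fun z => (hderiv z).differentiableAt
  have hGan : AnalyticOnNhd ℂ G Set.univ :=
    hGdiff.differentiableOn.analyticOnNhd isOpen_univ
  -- G vanishes at real points of M
  have hGreal : ∀ m ∈ M, G (m : ℂ) = 0 := by
    intro m hm
    have : G (m : ℂ) = ((∫ u : ℝ, H u * Real.exp (m * u) : ℝ) : ℂ) := by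
      have hfun : (fun u : ℝ => (H u : ℂ) * Complex.exp ((m : ℂ) * u))
          = fun u : ℝ => ((H u * Real.exp (m * u) : ℝ) : ℂ) := by
        ext u; push_cast; ring
      show (∫ u : ℝ, (H u : ℂ) * Complex.exp ((m : ℂ) * u)) = _
      rw [hfun]
      exact integral_ofReal
    rw [this, hA m hm, Complex.ofReal_zero]
  obtain ⟨x₀, hx₀⟩ := hM
  have hfreq : ∃ᶠ z in 𝓝[≠] (x₀ : ℂ), G z = 0 := by
    have hev : ∀ᶠ x in 𝓝[≠] x₀, G (x : ℝ) = 0 := by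
      have hMnhds : M ∈ 𝓝 x₀ := mem_interior_iff_mem_nhds.mp hx₀
      exact Filter.Eventually.filter_mono nhdsWithin_le_nhds
        (Filter.eventually_of_mem hMnhds fun x hx => hGreal x hx)
    have ht : Filter.Tendsto (fun x : ℝ => (x : ℂ)) (𝓝[≠] x₀) (𝓝[≠] (x₀ : ℂ)) := by
      refine tendsto_nhdsWithin_of_tendsto_nhds_of_eventually_within _ ?_ ?_
      · exact (Complex.continuous_ofReal.tendsto x₀).mono_left nhdsWithin_le_nhds
      · filter_upwards [eventually_mem_nhdsWithin] with x hx
        simpa [Set.mem_compl_iff, Complex.ofReal_inj] using hx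
    exact ht.frequently hev.frequently
  have hG0 : ∀ z : ℂ, G z = 0 := fun z =>
    hGan.eqOn_zero_of_preconnected_of_frequently_eq_zero isPreconnected_univ
      (Set.mem_univ (x₀ : ℂ)) hfreq (Set.mem_univ z)
  -- the Fourier transform of h := fun u => (H u : ℂ) vanishes
  have hFh : 𝓕 (fun u : ℝ => (H u : ℂ)) = 0 := by
    ext w
    rw [Real.fourier_eq']
    have heq : ∀ v : ℝ,
        Complex.exp (((-2 * Real.pi * (inner ℝ v w : ℝ) : ℝ) : ℂ) * Complex.I) • ((H v : ℝ) : ℂ)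
          = (H v : ℂ) * Complex.exp ((((-2 * Real.pi * w : ℝ) : ℂ) * Complex.I) * v) := by
      intro v
      rw [smul_eq_mul, mul_comm]
      congr 2
      simp only [RCLike.inner_apply, starRingEnd_apply, star_trivial]
      push_cast
      ring
    simp_rw [heq]
    exact hG0 _
  -- h := complexification of H is zero a.e., via testing against smooth compactly supported funcs
  have hInt : Integrable (fun u : ℝ => (H u : ℂ)) := by simpa using key_int 0
  have hae : ∀ᵐ u : ℝ ∂volume, (H u : ℂ) = 0 := by
    apply ae_eq_zero_of_integral_contDiff_smul_eq_zero hInt.locallyIntegrable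
    intro φ hφ hφsupp
    have smoothc : ContDiff ℝ ∞ fun x : ℝ => ((φ x : ℝ) : ℂ) :=
      Complex.ofRealCLM.contDiff.comp hφ
    have hsuppc : HasCompactSupport fun x : ℝ => ((φ x : ℝ) : ℂ) :=
      hφsupp.comp_left Complex.ofReal_zero
    have hdecay : ∀ k n : ℕ, ∃ B : ℝ, ∀ x : ℝ,
        ‖x‖ ^ k * ‖iteratedFDeriv ℝ n (fun x : ℝ => ((φ x : ℝ) : ℂ)) x‖ ≤ B := by
      intro k n
      obtain ⟨B, hB⟩ := Continuous.bounded_above_of_compact_support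
        (f := fun x : ℝ => ‖x‖ ^ k * ‖iteratedFDeriv ℝ n (fun x : ℝ => ((φ x : ℝ) : ℂ)) x‖)
        ((continuous_norm.pow k).mul
          (smoothc.continuous_iteratedFDeriv (mod_cast le_top)).norm)
        (((hsuppc.iteratedFDeriv (𝕜 := ℝ) n).norm).mul_left)
      refine ⟨B, fun x => le_trans ?_ (hB x)⟩
      rw [Real.norm_eq_abs]
      exact le_abs_self _
    let Φ : SchwartzMap ℝ ℂ := ⟨fun x => ((φ x : ℝ) : ℂ), smoothc, hdecay⟩
    let ψ : SchwartzMap ℝ ℂ := (SchwartzMap.fourierTransformCLE ℂ (SchwartzMap ℝ ℂ)).symm Φ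
    have hψF : 𝓕 (⇑ψ) = ⇑Φ := by
      have h1 : (SchwartzMap.fourierTransformCLE ℂ (SchwartzMap ℝ ℂ)) ψ = Φ :=
        (SchwartzMap.fourierTransformCLE ℂ (SchwartzMap ℝ ℂ)).apply_symm_apply Φ
      have h2 : ⇑((SchwartzMap.fourierTransformCLE ℂ (SchwartzMap ℝ ℂ)) ψ) = 𝓕 ⇑ψ :=
        rfl
      rw [← h2, h1]
    have hflip : (innerₗ ℝ).flip = innerₗ ℝ := by
      refine LinearMap.ext fun x => LinearMap.ext fun y => ?_
      simp only [LinearMap.flip_apply]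
      exact real_inner_comm x y
    have hmul := VectorFourier.integral_fourierIntegral_smul_eq_flip (L := innerₗ ℝ)
      (μ := volume) (ν := volume) (f := ⇑ψ) (g := fun u : ℝ => (H u : ℂ))
      Real.continuous_fourierChar continuous_inner ψ.integrable hInt
    rw [hflip] at hmul
    have hR : ∫ x : ℝ, ψ x •
        (VectorFourier.fourierIntegral Real.fourierChar volume (innerₗ ℝ)
          (fun u : ℝ => (H u : ℂ)) x) = 0 := by
      have hid : VectorFourier.fourierIntegral Real.fourierChar volume (innerₗ ℝ)
          (fun u : ℝ => (H u : ℂ)) = 𝓕 (fun u : ℝ => (H u : ℂ)) := rfl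
      rw [hid, hFh]
      simp
    rw [hR] at hmul
    have hL : VectorFourier.fourierIntegral Real.fourierChar volume (innerₗ ℝ) ⇑ψ = ⇑Φ := by
      rw [show VectorFourier.fourierIntegral Real.fourierChar volume (innerₗ ℝ) ⇑ψ
        = 𝓕 ⇑ψ from rfl, hψF]
    rw [hL] at hmul
    have hfun2 : (fun x : ℝ => φ x • ((H x : ℝ) : ℂ)) = fun x : ℝ => Φ x • ((H x : ℝ) : ℂ) := by
      ext x
      rw [Complex.real_smul]
      rfl
    show (∫ x : ℝ, φ x • ((H x : ℝ) : ℂ)) = 0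
    rw [hfun2]
    exact hmul
  have hgc : ∀ᵐ u : ℝ ∂volume, g (c * u) = 0 := by
    filter_upwards [hae] with u hu
    have hu' : H u = 0 := by exact_mod_cast hu
    rcases mul_eq_zero.mp hu' with h | h
    · exact h
    · exact absurd h (Real.exp_ne_zero _)
  have hA0 : volume ((fun u : ℝ => c * u) ⁻¹' {t | g t ≠ 0}) = 0 := ae_iff.mp hgc
  have hvol : volume {t : ℝ | g t ≠ 0} = 0 := by
    have heq := Real.volume_preimage_mul_left hc {t : ℝ | g t ≠ 0}
    have h0 : ENNReal.ofReal |c⁻¹| * volume {t : ℝ | g t ≠ 0} = 0 := by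
      rw [← heq]; exact hA0
    have hne : ENNReal.ofReal |c⁻¹| ≠ 0 := by
      have hpos : 0 < |c⁻¹| := abs_pos.mpr (inv_ne_zero hc)
      simp [ENNReal.ofReal_eq_zero, not_le, hpos, hc]
    exact (mul_eq_zero.mp h0).resolve_left hne
  exact ae_iff.mpr hvol
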